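/- If g ≥ 0, h ≥ 0 and h ≥ g + 2, then there are no numerical semigroups of genus g with efficacy h; moreover the only numerical semigroups with efficacy h = g + 1 are the semigroups {0} ∪ [m, ∞) with m = g + 1. -/
import Mathlib


/-- A numerical semigroup: a set of nonnegative integers containing 0, closed under
addition, with finite complement. -/
def IsNumericalSemigroup (Λ : Set ℕ) : Prop :=
  0 ∈ Λ ∧ (∀ a ∈ Λ, ∀ b ∈ Λ, a + b ∈ Λ) ∧ Λᶜ.Finite

/-- The Frobenius number: the largest nonnegative integer not in `Λ`. -/
noncomputable def frob (Λ : Set ℕ) : ℕ := sSup Λᶜ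

/-- The genus: the number of gaps of `Λ`. -/
noncomputable def genus (Λ : Set ℕ) : ℕ := Λᶜ.ncard

/-- The efficacy: the number of `x > f(Λ)` such that `Λ \ {x}` is closed under
addition. -/
noncomputable def efficacy (Λ : Set ℕ) : ℕ :=
  {x : ℕ | frob Λ < x ∧ ∀ a ∈ Λ \ {x}, ∀ b ∈ Λ \ {x}, a + b ∈ Λ \ {x}}.ncard

/-- There are no numerical semigroups of genus `g` with efficacy `h ≥ g + 2`, and the
only numerical semigroup of genus `g` with efficacy `g + 1` is `{0} ∪ [g+1, ∞)`. -/
theorem efficacy_le_genus_add_one (Λ : Set ℕ) (hΛ : IsNumericalSemigroup Λ) :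
    (genus Λ + 2 ≤ efficacy Λ → False) ∧
      (efficacy Λ = genus Λ + 1 → Λ = {0} ∪ {n : ℕ | genus Λ + 1 ≤ n}) := by
  obtain ⟨h0, hadd, hfin⟩ := hΛ
  -- Λ is infinite, so it has a positive element
  have hΛinf : Λ.Infinite := by
    have := hfin.infinite_compl
    rwa [compl_compl] at this
  obtain ⟨p, hpΛ, hppos⟩ := hΛinf.exists_gt 0
  -- the multiplicity m
  set m : ℕ := sInf {n : ℕ | n ∈ Λ ∧ 0 < n} with hm
  have hmne : {n : ℕ | n ∈ Λ ∧ 0 < n}.Nonempty := ⟨p, hpΛ, hppos⟩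
  have hmmem : m ∈ Λ ∧ 0 < m := Nat.sInf_mem hmne
  have hmmin : ∀ k, k ∈ Λ → 0 < k → m ≤ k := fun k hk hk' => Nat.sInf_le ⟨hk, hk'⟩
  -- everything above the Frobenius number is in Λ
  have hgt : ∀ n, frob Λ < n → n ∈ Λ := by
    intro n hn
    by_contra hnot
    have : n ≤ frob Λ := le_csSup hfin.bddAbove hnot
    omega
  -- the set of effective generators
  set E : Set ℕ := {x : ℕ | frob Λ < x ∧ ∀ a ∈ Λ \ {x}, ∀ b ∈ Λ \ {x}, a + b ∈ Λ \ {x}}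
    with hE
  have hEsub : E ⊆ Set.Ioc (frob Λ) (frob Λ + m) := by
    rintro x ⟨hx1, hx2⟩
    refine ⟨hx1, ?_⟩
    by_contra hle
    push_neg at hle
    have hxm : x - m ∈ Λ := hgt _ (by omega)
    have ha : m ∈ Λ \ {x} := ⟨hmmem.1, by simp; omega⟩
    have hb : x - m ∈ Λ \ {x} := ⟨hxm, by simp; omega⟩
    have := hx2 m ha (x - m) hb
    rw [show m + (x - m) = x by omega] at this
    exact this.2 rfl
  -- efficacy ≤ m
  have hIoc : (Set.Ioc (frob Λ) (frob Λ + m)).ncard = m := by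
    rw [show Set.Ioc (frob Λ) (frob Λ + m) = ↑(Finset.Ioc (frob Λ) (frob Λ + m)) by simp,
      Set.ncard_coe_finset, Nat.card_Ioc]
    omega
  have hhm : efficacy Λ ≤ m := by
    have := Set.ncard_le_ncard hEsub (Set.finite_Ioc _ _)
    rwa [hIoc] at this
  -- the gaps contain {1, ..., m-1}
  have hIco : Set.Ico 1 m ⊆ Λᶜ := by
    intro k hk
    simp only [Set.mem_Ico] at hk
    intro hkΛ
    have := hmmin k hkΛ (by omega)
    omega
  have hIcocard : (Set.Ico 1 m).ncard = m - 1 := by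
    rw [show Set.Ico 1 m = ↑(Finset.Ico 1 m) by simp, Set.ncard_coe_finset, Nat.card_Ico]
  have hmg : m - 1 ≤ genus Λ := by
    have := Set.ncard_le_ncard hIco hfin
    rwa [hIcocard] at this
  have hmpos : 0 < m := hmmem.2
  constructor
  · intro hge
    omega
  · intro heq
    have hmeq : m = genus Λ + 1 := by omega
    have hcompl : Λᶜ = Set.Ico 1 m := by
      refine (Set.eq_of_subset_of_ncard_le hIco ?_ hfin).symm
      rw [hIcocard]
      have hg : genus Λ = Λᶜ.ncard := rfl
      omega
    have : Λ = (Set.Ico 1 m)ᶜ := by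
      rw [← hcompl, compl_compl]
    rw [← hmeq]
    ext n
    rw [this]
    simp only [Set.mem_compl_iff, Set.mem_Ico, Set.mem_union, Set.mem_singleton_iff,
      Set.mem_setOf_eq]
    omega
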